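/- The relation distance d is a pseudometric on relations over a fixed finite set X: it is nonnegative, symmetric, satisfies d(r,r) = 0, and satisfies the triangle inequality d(r₁,r₃) ≤ d(r₁,r₂) + d(r₂,r₃). -/

import Mathlib

/-- Weight of a function `g` between relation objects `(Y1,R1)` and `(Y2,R2)` over `X`. -/
def wgt {X Y1 Y2 : Type*} [Fintype X] [Fintype Y1] [Fintype Y2] [DecidableEq Y2]
    (R1 : X → Y1 → Bool) (R2 : X → Y2 → Bool) (g : Y1 → Y2) : ℕ :=
  Finset.univ.sup (fun x : X =>
    (Finset.univ \ Finset.image g Finset.univ).card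
    + (Finset.univ.filter (fun y : Y1 => R1 x y ≠ R2 x (g y))).card)

/-- The relation distance between `(Y1,R1)` and `(Y2,R2)` over `X`. -/
noncomputable def ddist {X Y1 Y2 : Type*} [Fintype X] [Fintype Y1] [Fintype Y2]
    [DecidableEq Y1] [DecidableEq Y2]
    (R1 : X → Y1 → Bool) (R2 : X → Y2 → Bool) : ℕ :=
  max (sInf {n | ∃ g : Y1 → Y2, n = wgt R1 R2 g})
      (sInf {n | ∃ g : Y2 → Y1, n = wgt R2 R1 g})

section Aux

variable {X Y1 Y2 Y3 : Type*} [Fintype X]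

lemma le_wgt [Fintype Y1] [Fintype Y2] [DecidableEq Y2]
    (R1 : X → Y1 → Bool) (R2 : X → Y2 → Bool) (g : Y1 → Y2) (x : X) :
    (Finset.univ \ Finset.image g Finset.univ).card
      + (Finset.univ.filter (fun y : Y1 => R1 x y ≠ R2 x (g y))).card ≤ wgt R1 R2 g := by
  unfold wgt
  exact Finset.le_sup (f := fun x : X =>
    (Finset.univ \ Finset.image g Finset.univ).card
    + (Finset.univ.filter (fun y : Y1 => R1 x y ≠ R2 x (g y))).card) (Finset.mem_univ x)

lemma wgt_le' [Fintype Y1] [Fintype Y2] [DecidableEq Y2]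
    (R1 : X → Y1 → Bool) (R2 : X → Y2 → Bool) (g : Y1 → Y2) {n : ℕ}
    (h : ∀ x : X, (Finset.univ \ Finset.image g Finset.univ).card
      + (Finset.univ.filter (fun y : Y1 => R1 x y ≠ R2 x (g y))).card ≤ n) :
    wgt R1 R2 g ≤ n := by
  unfold wgt
  exact Finset.sup_le fun x _ => h x

/-- Any map into a type of at least the same cardinality can be replaced by an
injective map of no larger weight. -/
lemma exists_injective_wgt_le [Fintype Y1] [Fintype Y2] [DecidableEq Y1] [DecidableEq Y2]
    (R1 : X → Y1 → Bool) (R2 : X → Y2 → Bool)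
    (hcard : Fintype.card Y1 ≤ Fintype.card Y2) (g : Y1 → Y2) :
    ∃ g' : Y1 → Y2, Function.Injective g' ∧ wgt R1 R2 g' ≤ wgt R1 R2 g := by
  generalize hk : Fintype.card Y1 - (Finset.univ.image g).card = k
  induction k generalizing g with
  | zero =>
    refine ⟨g, ?_, le_rfl⟩
    have hle : (Finset.univ.image g).card ≤ Fintype.card Y1 :=
      le_trans Finset.card_image_le (le_of_eq Finset.card_univ)
    have heq : (Finset.univ.image g).card = (Finset.univ : Finset Y1).card := by
      rw [Finset.card_univ]; omega
    have := Finset.injOn_of_card_image_eq heq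
    rw [Finset.coe_univ] at this
    exact Set.injOn_univ.mp this
  | succ k ih =>
    -- g is not injective
    have hlt : (Finset.univ.image g).card < Fintype.card Y1 := by omega
    have hninj : ¬ Function.Injective g := by
      intro hinj
      rw [Finset.card_image_of_injective Finset.univ hinj, Finset.card_univ] at hlt
      omega
    obtain ⟨y, y', hgy, hyy'⟩ := Function.not_injective_iff.mp hninj
    -- find an unhit point z'
    have hzlt : (Finset.univ.image g).card < Fintype.card Y2 := lt_of_lt_of_le hlt hcard
    have : ((Finset.univ : Finset Y2) \ Finset.univ.image g).Nonempty := by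
      rw [← Finset.card_pos, Finset.card_sdiff_of_subset (Finset.subset_univ _), Finset.card_univ]
      omega
    obtain ⟨z', hz'⟩ := this
    have hz'img : z' ∉ Finset.univ.image g := (Finset.mem_sdiff.mp hz').2
    set gp := Function.update g y z' with hgp
    have himg : Finset.univ.image gp = insert z' (Finset.univ.image g) := by
      ext b
      simp only [Finset.mem_image, Finset.mem_insert, Finset.mem_univ, true_and]
      constructor
      · rintro ⟨a, ha⟩
        by_cases hay : a = y
        · subst hay
          rw [hgp, Function.update_self] at ha
          exact Or.inl ha.symm
        · rw [hgp, Function.update_of_ne hay] at ha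
          exact Or.inr ⟨a, ha⟩
      · rintro (rfl | ⟨a, ha⟩)
        · exact ⟨y, by rw [hgp, Function.update_self]⟩
        · by_cases hay : a = y
          · subst hay
            refine ⟨y', ?_⟩
            rw [hgp, Function.update_of_ne (Ne.symm hyy'), ← hgy, ha]
          · exact ⟨a, by rw [hgp, Function.update_of_ne hay, ha]⟩
    have himgcard : (Finset.univ.image gp).card = (Finset.univ.image g).card + 1 := by
      rw [himg, Finset.card_insert_of_notMem hz'img]
    -- weight does not increase
    have hw : wgt R1 R2 gp ≤ wgt R1 R2 g := by
      apply wgt_le'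
      intro x
      have hmiss : ((Finset.univ : Finset Y2) \ Finset.univ.image gp).card + 1
          = ((Finset.univ : Finset Y2) \ Finset.univ.image g).card := by
        rw [Finset.card_sdiff_of_subset (Finset.subset_univ _),
          Finset.card_sdiff_of_subset (Finset.subset_univ _), himgcard, Finset.card_univ]
        have : (Finset.univ.image g).card < Fintype.card Y2 := hzlt
        omega
      have hfil : (Finset.univ.filter (fun a : Y1 => R1 x a ≠ R2 x (gp a))).card
          ≤ (Finset.univ.filter (fun a : Y1 => R1 x a ≠ R2 x (g a))).card + 1 := by
        have hsub : Finset.univ.filter (fun a : Y1 => R1 x a ≠ R2 x (gp a))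
            ⊆ insert y (Finset.univ.filter (fun a : Y1 => R1 x a ≠ R2 x (g a))) := by
          intro a ha
          simp only [Finset.mem_filter, Finset.mem_univ, true_and] at ha
          by_cases hay : a = y
          · exact Finset.mem_insert.mpr (Or.inl hay)
          · rw [hgp, Function.update_of_ne hay] at ha
            exact Finset.mem_insert.mpr (Or.inr (by
              simp only [Finset.mem_filter, Finset.mem_univ, true_and]; exact ha))
        calc (Finset.univ.filter (fun a : Y1 => R1 x a ≠ R2 x (gp a))).card
            ≤ (insert y (Finset.univ.filter (fun a : Y1 => R1 x a ≠ R2 x (g a)))).card :=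
              Finset.card_le_card hsub
          _ ≤ _ := Finset.card_insert_le _ _
      have hle : ((Finset.univ : Finset Y2) \ Finset.univ.image gp).card
          + (Finset.univ.filter (fun a : Y1 => R1 x a ≠ R2 x (gp a))).card
          ≤ ((Finset.univ : Finset Y2) \ Finset.univ.image g).card
          + (Finset.univ.filter (fun a : Y1 => R1 x a ≠ R2 x (g a))).card := by omega
      exact le_trans hle (le_wgt R1 R2 g x)
    obtain ⟨g'', hinj, hle⟩ := ih gp (by omega)
    exact ⟨g'', hinj, le_trans hle hw⟩

/-- Composition with an injective first leg is subadditive in weight. -/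
lemma wgt_comp_le [Fintype Y1] [Fintype Y2] [Fintype Y3] [DecidableEq Y2] [DecidableEq Y3]
    [DecidableEq Y1]
    (R1 : X → Y1 → Bool) (R2 : X → Y2 → Bool) (R3 : X → Y3 → Bool)
    (g1 : Y1 → Y2) (hg1 : Function.Injective g1) (g2 : Y2 → Y3) :
    wgt R1 R3 (g2 ∘ g1) ≤ wgt R1 R2 g1 + wgt R2 R3 g2 := by
  apply wgt_le'
  intro x
  set A := Finset.univ.image g1 with hA
  -- missing part
  have himg : Finset.univ.image (g2 ∘ g1) = A.image g2 := by
    rw [hA, Finset.image_image]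
  have hmiss : ((Finset.univ : Finset Y3) \ Finset.univ.image (g2 ∘ g1)).card
      ≤ ((Finset.univ : Finset Y3) \ Finset.univ.image g2).card
        + ((Finset.univ : Finset Y2) \ A).card := by
    have hsub : (Finset.univ : Finset Y3) \ Finset.univ.image (g2 ∘ g1)
        ⊆ ((Finset.univ : Finset Y3) \ Finset.univ.image g2)
          ∪ ((Finset.univ : Finset Y2) \ A).image g2 := by
      intro b hb
      rw [himg] at hb
      simp only [Finset.mem_sdiff, Finset.mem_univ, true_and] at hb
      by_cases hbi : b ∈ Finset.univ.image g2
      · obtain ⟨w, _, rfl⟩ := Finset.mem_image.mp hbi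
        refine Finset.mem_union_right _ (Finset.mem_image.mpr ⟨w, ?_, rfl⟩)
        simp only [Finset.mem_sdiff, Finset.mem_univ, true_and]
        intro hwA
        exact hb (Finset.mem_image.mpr ⟨w, hwA, rfl⟩)
      · exact Finset.mem_union_left _ (by
          simp only [Finset.mem_sdiff, Finset.mem_univ, true_and]; exact hbi)
    calc ((Finset.univ : Finset Y3) \ Finset.univ.image (g2 ∘ g1)).card
        ≤ (((Finset.univ : Finset Y3) \ Finset.univ.image g2)
            ∪ ((Finset.univ : Finset Y2) \ A).image g2).card := Finset.card_le_card hsub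
      _ ≤ ((Finset.univ : Finset Y3) \ Finset.univ.image g2).card
            + (((Finset.univ : Finset Y2) \ A).image g2).card := Finset.card_union_le _ _
      _ ≤ _ := by
          exact Nat.add_le_add_left Finset.card_image_le _
  -- filter part
  have hfil : (Finset.univ.filter (fun y : Y1 => R1 x y ≠ R3 x ((g2 ∘ g1) y))).card
      ≤ (Finset.univ.filter (fun y : Y1 => R1 x y ≠ R2 x (g1 y))).card
        + (Finset.univ.filter (fun z : Y2 => R2 x z ≠ R3 x (g2 z))).card := by
    have hsub : Finset.univ.filter (fun y : Y1 => R1 x y ≠ R3 x ((g2 ∘ g1) y))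
        ⊆ (Finset.univ.filter (fun y : Y1 => R1 x y ≠ R2 x (g1 y)))
          ∪ (Finset.univ.filter (fun y : Y1 => R2 x (g1 y) ≠ R3 x (g2 (g1 y)))) := by
      intro a ha
      simp only [Finset.mem_filter, Finset.mem_univ, true_and, Finset.mem_union,
        Function.comp_apply] at ha ⊢
      by_cases h12 : R1 x a = R2 x (g1 a)
      · exact Or.inr (fun h => ha (h12.trans h))
      · exact Or.inl h12
    have hsec : (Finset.univ.filter (fun y : Y1 => R2 x (g1 y) ≠ R3 x (g2 (g1 y)))).card
        ≤ (Finset.univ.filter (fun z : Y2 => R2 x z ≠ R3 x (g2 z))).card := by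
      rw [← Finset.card_image_of_injective
        (Finset.univ.filter (fun y : Y1 => R2 x (g1 y) ≠ R3 x (g2 (g1 y)))) hg1]
      apply Finset.card_le_card
      intro b hb
      obtain ⟨a, ha, rfl⟩ := Finset.mem_image.mp hb
      simp only [Finset.mem_filter, Finset.mem_univ, true_and] at ha ⊢
      exact ha
    calc (Finset.univ.filter (fun y : Y1 => R1 x y ≠ R3 x ((g2 ∘ g1) y))).card
        ≤ _ := Finset.card_le_card hsub
      _ ≤ _ := Finset.card_union_le _ _
      _ ≤ _ := Nat.add_le_add_left hsec _
  have h1 : ((Finset.univ : Finset Y2) \ A).card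
      + (Finset.univ.filter (fun y : Y1 => R1 x y ≠ R2 x (g1 y))).card ≤ wgt R1 R2 g1 := by
    have := le_wgt R1 R2 g1 x; rwa [hA]
  have h2 : ((Finset.univ : Finset Y3) \ Finset.univ.image g2).card
      + (Finset.univ.filter (fun z : Y2 => R2 x z ≠ R3 x (g2 z))).card ≤ wgt R2 R3 g2 :=
    le_wgt R2 R3 g2 x
  omega

/-- From an injective backward map and a forward map out of the middle object,
build a forward map with controlled weight. -/
lemma exists_wgt_via_inverse [Fintype Y1] [Fintype Y2] [Fintype Y3]
    [DecidableEq Y1] [DecidableEq Y2] [DecidableEq Y3] [Nonempty Y2]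
    (R1 : X → Y1 → Bool) (R2 : X → Y2 → Bool) (R3 : X → Y3 → Bool)
    (g' : Y2 → Y1) (hg' : Function.Injective g') (g2 : Y2 → Y3) :
    ∃ h : Y1 → Y3, wgt R1 R3 h ≤ wgt R2 R1 g' + wgt R2 R3 g2 := by
  classical
  set inv := Function.invFun g' with hinvdef
  have hinv : ∀ z, inv (g' z) = z := fun z => Function.leftInverse_invFun hg' z
  refine ⟨g2 ∘ inv, ?_⟩
  apply wgt_le'
  intro x
  -- missing part : image of g2∘inv contains image of g2
  have hmiss : ((Finset.univ : Finset Y3) \ Finset.univ.image (g2 ∘ inv)).card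
      ≤ ((Finset.univ : Finset Y3) \ Finset.univ.image g2).card := by
    apply Finset.card_le_card
    intro b hb
    simp only [Finset.mem_sdiff, Finset.mem_univ, true_and, Finset.mem_image,
      Function.comp_apply] at hb ⊢
    rintro ⟨z, hz⟩
    exact hb ⟨g' z, by rw [hinv z]; exact hz⟩
  -- filter part
  have hfil : (Finset.univ.filter (fun y : Y1 => R1 x y ≠ R3 x ((g2 ∘ inv) y))).card
      ≤ ((Finset.univ : Finset Y1) \ Finset.univ.image g').card
        + ((Finset.univ.filter (fun z : Y2 => R2 x z ≠ R1 x (g' z))).card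
          + (Finset.univ.filter (fun z : Y2 => R2 x z ≠ R3 x (g2 z))).card) := by
    have hsub : Finset.univ.filter (fun y : Y1 => R1 x y ≠ R3 x ((g2 ∘ inv) y))
        ⊆ ((Finset.univ : Finset Y1) \ Finset.univ.image g')
          ∪ ((Finset.univ.filter (fun z : Y2 => R2 x z ≠ R1 x (g' z)))
              ∪ (Finset.univ.filter (fun z : Y2 => R2 x z ≠ R3 x (g2 z)))).image g' := by
      intro a ha
      simp only [Finset.mem_filter, Finset.mem_univ, true_and, Function.comp_apply] at ha
      by_cases hai : a ∈ Finset.univ.image g'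
      · obtain ⟨z, _, rfl⟩ := Finset.mem_image.mp hai
        rw [hinv z] at ha
        refine Finset.mem_union_right _ (Finset.mem_image.mpr ⟨z, ?_, rfl⟩)
        simp only [Finset.mem_union, Finset.mem_filter, Finset.mem_univ, true_and]
        by_cases h21 : R2 x z = R1 x (g' z)
        · exact Or.inr (fun h => ha (h21.symm.trans h))
        · exact Or.inl h21
      · exact Finset.mem_union_left _ (by
          simp only [Finset.mem_sdiff, Finset.mem_univ, true_and]; exact hai)
    calc (Finset.univ.filter (fun y : Y1 => R1 x y ≠ R3 x ((g2 ∘ inv) y))).card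
        ≤ _ := Finset.card_le_card hsub
      _ ≤ ((Finset.univ : Finset Y1) \ Finset.univ.image g').card
            + (((Finset.univ.filter (fun z : Y2 => R2 x z ≠ R1 x (g' z)))
              ∪ (Finset.univ.filter (fun z : Y2 => R2 x z ≠ R3 x (g2 z)))).image g').card :=
            Finset.card_union_le _ _
      _ ≤ _ := by
          refine Nat.add_le_add_left ?_ _
          calc (((Finset.univ.filter (fun z : Y2 => R2 x z ≠ R1 x (g' z)))
              ∪ (Finset.univ.filter (fun z : Y2 => R2 x z ≠ R3 x (g2 z)))).image g').card
              ≤ ((Finset.univ.filter (fun z : Y2 => R2 x z ≠ R1 x (g' z)))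
                ∪ (Finset.univ.filter (fun z : Y2 => R2 x z ≠ R3 x (g2 z)))).card :=
                Finset.card_image_le
            _ ≤ _ := Finset.card_union_le _ _
  have h1 : ((Finset.univ : Finset Y1) \ Finset.univ.image g').card
      + (Finset.univ.filter (fun z : Y2 => R2 x z ≠ R1 x (g' z))).card ≤ wgt R2 R1 g' :=
    le_wgt R2 R1 g' x
  have h2 : ((Finset.univ : Finset Y3) \ Finset.univ.image g2).card
      + (Finset.univ.filter (fun z : Y2 => R2 x z ≠ R3 x (g2 z))).card ≤ wgt R2 R3 g2 :=
    le_wgt R2 R3 g2 x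
  have hm2 : (0 : ℕ) ≤ ((Finset.univ : Finset Y3) \ Finset.univ.image g2).card := Nat.zero_le _
  omega

lemma sInf_set_nonempty [Fintype Y1] [Fintype Y2] [DecidableEq Y2] [Nonempty Y2]
    (R1 : X → Y1 → Bool) (R2 : X → Y2 → Bool) :
    {n | ∃ g : Y1 → Y2, n = wgt R1 R2 g}.Nonempty :=
  ⟨wgt R1 R2 (fun _ => Classical.arbitrary Y2), by exact ⟨_, rfl⟩⟩

/-- Key lemma: the forward infimum satisfies the triangle bound. -/
lemma key [Fintype Y1] [Fintype Y2] [Fintype Y3]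
    [DecidableEq Y1] [DecidableEq Y2] [DecidableEq Y3]
    [Nonempty Y1] [Nonempty Y2] [Nonempty Y3]
    (R1 : X → Y1 → Bool) (R2 : X → Y2 → Bool) (R3 : X → Y3 → Bool) :
    sInf {n | ∃ g : Y1 → Y3, n = wgt R1 R3 g} ≤ ddist R1 R2 + ddist R2 R3 := by
  obtain ⟨g2, hg2⟩ := Nat.sInf_mem (sInf_set_nonempty R2 R3)
  have hg2le : wgt R2 R3 g2 ≤ ddist R2 R3 := by
    rw [← hg2]; exact le_max_left _ _
  by_cases hcard : Fintype.card Y1 ≤ Fintype.card Y2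
  · obtain ⟨g1, hg1⟩ := Nat.sInf_mem (sInf_set_nonempty R1 R2)
    obtain ⟨g1', hinj, hle⟩ := exists_injective_wgt_le R1 R2 hcard g1
    have hg1le : wgt R1 R2 g1' ≤ ddist R1 R2 :=
      le_trans hle (by rw [← hg1]; exact le_max_left _ _)
    calc sInf {n | ∃ g : Y1 → Y3, n = wgt R1 R3 g}
        ≤ wgt R1 R3 (g2 ∘ g1') := Nat.sInf_le (by exact ⟨_, rfl⟩)
      _ ≤ wgt R1 R2 g1' + wgt R2 R3 g2 := wgt_comp_le R1 R2 R3 g1' hinj g2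
      _ ≤ _ := Nat.add_le_add hg1le hg2le
  · obtain ⟨g', hg'⟩ := Nat.sInf_mem (sInf_set_nonempty R2 R1)
    obtain ⟨g'', hinj, hle⟩ := exists_injective_wgt_le R2 R1 (le_of_not_ge hcard) g'
    have hg'le : wgt R2 R1 g'' ≤ ddist R1 R2 :=
      le_trans hle (by rw [← hg']; exact le_max_right _ _)
    obtain ⟨h, hh⟩ := exists_wgt_via_inverse R1 R2 R3 g'' hinj g2
    calc sInf {n | ∃ g : Y1 → Y3, n = wgt R1 R3 g}
        ≤ wgt R1 R3 h := Nat.sInf_le (by exact ⟨_, rfl⟩)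
      _ ≤ wgt R2 R1 g'' + wgt R2 R3 g2 := hh
      _ ≤ _ := Nat.add_le_add hg'le hg2le

end Aux

/-- The relation distance is a pseudometric: nonnegative, symmetric, reflexive,
and it satisfies the triangle inequality. -/
theorem ddist_pseudometric {X Y₁ Y₂ Y₃ : Type*} [Fintype X] [Nonempty X]
    [Fintype Y₁] [Fintype Y₂] [Fintype Y₃]
    [DecidableEq Y₁] [DecidableEq Y₂] [DecidableEq Y₃]
    [Nonempty Y₁] [Nonempty Y₂] [Nonempty Y₃]
    (R₁ : X → Y₁ → Bool) (R₂ : X → Y₂ → Bool) (R₃ : X → Y₃ → Bool) :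
    0 ≤ ddist R₁ R₂ ∧
    ddist R₁ R₂ = ddist R₂ R₁ ∧
    ddist R₁ R₁ = 0 ∧
    ddist R₁ R₃ ≤ ddist R₁ R₂ + ddist R₂ R₃ := by
  refine ⟨Nat.zero_le _, ?_, ?_, ?_⟩
  · exact max_comm _ _
  · -- reflexivity
    have hid : wgt R₁ R₁ (id : Y₁ → Y₁) = 0 := by
      apply Nat.le_zero.mp
      apply wgt_le'
      intro x
      simp
    have h0 : sInf {n | ∃ g : Y₁ → Y₁, n = wgt R₁ R₁ g} = 0 :=
      Nat.le_zero.mp ((Nat.sInf_le (by exact ⟨id, rfl⟩)).trans_eq hid)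
    simp [ddist, h0]
  · -- triangle
    have h1 : sInf {n | ∃ g : Y₁ → Y₃, n = wgt R₁ R₃ g} ≤ ddist R₁ R₂ + ddist R₂ R₃ :=
      key R₁ R₂ R₃
    have h2 : sInf {n | ∃ g : Y₃ → Y₁, n = wgt R₃ R₁ g} ≤ ddist R₃ R₂ + ddist R₂ R₁ :=
      key R₃ R₂ R₁
    have hsym12 : ddist R₂ R₁ = ddist R₁ R₂ := max_comm _ _
    have hsym23 : ddist R₃ R₂ = ddist R₂ R₃ := max_comm _ _
    rw [hsym12, hsym23] at h2
    exact max_le h1 (by omega)
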